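/- Consider the three-item all-pay auction with common item values v_1 ≥ v_2 ≥ v_3 > 0 and budgets satisfying B_i ≥ max{(v_1 + v_2 + v_3)/2, v_1} for both i ∈ {1,2}, and suppose (v_1 + v_2 + v_3)/2 ≤ v_1. Define the points A = (v_1, 0, 0) and B = (0, v_2, v_3) in ℝ³. Then the strategy profile in which each player i ∈ {1,2} plays the uniform distribution on the segment AB is a Nash equilibrium. -/

import Mathlib

open MeasureTheory Set

noncomputable section

/-- Probability that player `i` wins an item of common value `vj` when bidding `xi`
while the opponent bids `xo`: the strictly higher bid wins; on a tie at
`min {B₁, B₂, vj}` the player with the strictly larger `min {Bᵢ, vj}` wins, and all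
other ties are fair coins. -/
def winProb3 (B : Fin 2 → ℝ) (vj : ℝ) (i : Fin 2) (xi xo : ℝ) : ℝ :=
  if xo < xi then 1
  else if xi < xo then 0
  else if xi = min (min (B 0) (B 1)) vj ∧ min (B (1 - i)) vj < min (B i) vj then 1
  else if xi = min (min (B 0) (B 1)) vj ∧ min (B i) vj < min (B (1 - i)) vj then 0
  else 1 / 2

/-- Expected total utility of player `i` from the pure bid vectors `p` (own) and
`q` (opponent) in the three-item auction with common values `v`. -/
def payoff3 (B : Fin 2 → ℝ) (v : Fin 3 → ℝ) (i : Fin 2) (p q : ℝ × ℝ × ℝ) : ℝ :=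
  (winProb3 B (v 0) i p.1 q.1 * v 0 - p.1) +
    (winProb3 B (v 1) i p.2.1 q.2.1 * v 1 - p.2.1) +
    (winProb3 B (v 2) i p.2.2 q.2.2 * v 2 - p.2.2)

/-- Feasible bid vectors of a player with budget `Bi` in the three-item auction. -/
def Feas3 (Bi : ℝ) : Set (ℝ × ℝ × ℝ) :=
  {p | 0 ≤ p.1 ∧ 0 ≤ p.2.1 ∧ 0 ≤ p.2.2 ∧ p.1 + p.2.1 + p.2.2 ≤ Bi}

/-- A mixed strategy with budget `Bi`: a probability measure on the feasible set. -/
def IsStrategy3 (Bi : ℝ) (μ : Measure (ℝ × ℝ × ℝ)) : Prop :=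
  IsProbabilityMeasure μ ∧ μ (Feas3 Bi) = 1

/-- Expected utility of player `i` when he plays `μ` and the opponent plays `ν`. -/
def expUtil3 (B : Fin 2 → ℝ) (v : Fin 3 → ℝ) (i : Fin 2)
    (μ ν : Measure (ℝ × ℝ × ℝ)) : ℝ :=
  ∫ p, (∫ q, payoff3 B v i p q ∂ν) ∂μ

/-- `(F 0, F 1)` is a (mixed) Nash equilibrium of the three-item all-pay auction
with symmetric values. -/
def IsNash3 (B : Fin 2 → ℝ) (v : Fin 3 → ℝ) (F : Fin 2 → Measure (ℝ × ℝ × ℝ)) :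
    Prop :=
  (∀ i, IsStrategy3 (B i) (F i)) ∧
  ∀ i, ∀ μ, IsStrategy3 (B i) μ →
    expUtil3 B v i μ (F (1 - i)) ≤ expUtil3 B v i (F i) (F (1 - i))

/-- The uniform distribution on the segment from `a` to `b` in `ℝ³`: the pushforward
of the uniform distribution on `[0, 1]` under the affine parameterization. -/
def unifSeg3 (a b : ℝ × ℝ × ℝ) : Measure (ℝ × ℝ × ℝ) :=
  Measure.map (fun t : ℝ =>
      ((1 - t) * a.1 + t * b.1,
        (1 - t) * a.2.1 + t * b.2.1,
        (1 - t) * a.2.2 + t * b.2.2))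
    (volume.restrict (Icc (0 : ℝ) 1))

namespace NashAux

variable (B : Fin 2 → ℝ) (vj : ℝ) (i : Fin 2)

lemma wp_abs_le (xi xo : ℝ) : |winProb3 B vj i xi xo| ≤ 1 := by
  unfold winProb3
  split_ifs <;> rw [abs_le] <;> constructor <;> norm_num

lemma wp_meas (xi : ℝ) : Measurable (fun xo => winProb3 B vj i xi xo) := by
  unfold winProb3
  refine Measurable.ite (measurableSet_lt measurable_id measurable_const)
    measurable_const ?_
  exact Measurable.ite (measurableSet_lt measurable_const measurable_id)
    measurable_const measurable_const

lemma prob_restrict : IsProbabilityMeasure (volume.restrict (Icc (0:ℝ) 1)) := by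
  constructor
  rw [Measure.restrict_apply_univ, Real.volume_Icc]
  norm_num

lemma wp_integrable (g : ℝ → ℝ) (hg : Measurable g) (x : ℝ) :
    IntegrableOn (fun t => winProb3 B vj i x (g t)) (Icc (0:ℝ) 1) := by
  haveI := prob_restrict
  refine (integrable_const (1:ℝ)).mono'
    (((wp_meas B vj i x).comp hg).aestronglyMeasurable) ?_
  exact ae_of_all _ fun t => wp_abs_le B vj i x (g t)

lemma wp_integral_aux (g : ℝ → ℝ) (x t0 : ℝ) (S : Set ℝ) (hS : MeasurableSet S)
    (hset : ∀ t, g t < x ↔ t ∈ S) (htie : ∀ t, g t = x → t = t0) :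
    ∫ t in Icc (0:ℝ) 1, winProb3 B vj i x (g t)
      = (volume (Icc (0:ℝ) 1 ∩ S)).toReal := by
  have hae : ∀ᵐ t ∂(volume.restrict (Icc (0:ℝ) 1)), g t ≠ x := by
    refine ae_restrict_of_ae ?_
    rw [ae_iff]
    refine measure_mono_null (fun t ht => ?_) (measure_singleton t0)
    simp only [mem_setOf_eq, not_not] at ht
    exact htie t ht
  have hcongr : ∫ t in Icc (0:ℝ) 1, winProb3 B vj i x (g t)
      = ∫ t in Icc (0:ℝ) 1, S.indicator (fun _ => (1:ℝ)) t := by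
    refine integral_congr_ae ?_
    filter_upwards [hae] with t ht
    rcases lt_trichotomy (g t) x with h | h | h
    · rw [indicator_of_mem ((hset t).mp h)]
      unfold winProb3; rw [if_pos h]
    · exact absurd h ht
    · rw [indicator_of_notMem (fun hmem => absurd ((hset t).mpr hmem) (not_lt.mpr h.le))]
      unfold winProb3
      rw [if_neg (not_lt.mpr h.le), if_pos h]
  rw [hcongr, setIntegral_indicator hS, setIntegral_const, smul_eq_mul, mul_one]
  rfl

lemma wp_integral_down (c : ℝ) (hc : 0 < c) (x : ℝ) :
    ∫ t in Icc (0:ℝ) 1, winProb3 B vj i x ((1 - t) * c)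
      = min (max (x / c) 0) 1 := by
  set a : ℝ := 1 - x / c with ha_def
  rw [wp_integral_aux B vj i (fun t => (1 - t) * c) x a (Ioi a) measurableSet_Ioi
    (fun t => ?_) (fun t ht => ?_)]
  · rcases lt_or_ge a 0 with ha | ha
    · have hx : 1 < x / c := by simp only [ha_def] at ha; linarith
      have h1 : Icc (0:ℝ) 1 ∩ Ioi a = Icc 0 1 :=
        inter_eq_self_of_subset_left fun t ht => mem_Ioi.mpr (lt_of_lt_of_le ha ht.1)
      rw [h1, Real.volume_Icc]
      rw [max_eq_left (by linarith : (0:ℝ) ≤ x / c), min_eq_right hx.le]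
      norm_num
    · rcases le_or_gt a 1 with ha1 | ha1
      · have h1 : Icc (0:ℝ) 1 ∩ Ioi a = Ioc a 1 := by
          ext t
          simp only [mem_inter_iff, mem_Icc, mem_Ioi, mem_Ioc]
          constructor
          · rintro ⟨⟨_, h1⟩, h2⟩; exact ⟨h2, h1⟩
          · rintro ⟨h2, h1⟩; exact ⟨⟨le_trans ha h2.le, h1⟩, h2⟩
        have hx0 : 0 ≤ x / c := by simp only [ha_def] at ha1; linarith
        have hx1 : x / c ≤ 1 := by simp only [ha_def] at ha; linarith
        rw [h1, Real.volume_Ioc, max_eq_left hx0, min_eq_left hx1,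
          ENNReal.toReal_ofReal (by linarith)]
        simp only [ha_def]; ring
      · have h1 : Icc (0:ℝ) 1 ∩ Ioi a = ∅ := by
          rw [eq_empty_iff_forall_notMem]
          rintro t ⟨⟨_, h1⟩, h2⟩
          simp only [mem_Ioi] at h2
          linarith
        have hx : x / c < 0 := by simp only [ha_def] at ha1; linarith
        rw [h1, measure_empty, max_eq_right hx.le, min_eq_left (by norm_num)]
        norm_num
  · rw [mem_Ioi, ha_def]
    constructor
    · intro h
      have h2 : 1 - t < x / c := (lt_div_iff₀ hc).mpr h
      linarith
    · intro h
      have h2 : 1 - t < x / c := by linarith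
      exact (lt_div_iff₀ hc).mp h2
  · have hxc : x / c = 1 - t := by
      rw [← ht]
      exact mul_div_cancel_right₀ _ hc.ne'
    rw [ha_def, hxc]; ring

lemma wp_integral_up (c : ℝ) (hc : 0 < c) (x : ℝ) :
    ∫ t in Icc (0:ℝ) 1, winProb3 B vj i x (t * c)
      = min (max (x / c) 0) 1 := by
  set b : ℝ := x / c with hb_def
  rw [wp_integral_aux B vj i (fun t => t * c) x b (Iio b) measurableSet_Iio
    (fun t => ?_) (fun t ht => ?_)]
  · rcases le_or_gt b 0 with hb | hb
    · have h1 : Icc (0:ℝ) 1 ∩ Iio b = ∅ := by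
        rw [eq_empty_iff_forall_notMem]
        rintro t ⟨⟨h0, _⟩, h2⟩
        simp only [mem_Iio] at h2
        linarith
      rw [h1, measure_empty, max_eq_right hb, min_eq_left (by norm_num)]
      norm_num
    · rcases le_or_gt b 1 with hb1 | hb1
      · have h1 : Icc (0:ℝ) 1 ∩ Iio b = Ico 0 b := by
          ext t
          simp only [mem_inter_iff, mem_Icc, mem_Iio, mem_Ico]
          constructor
          · rintro ⟨⟨h0, _⟩, h2⟩; exact ⟨h0, h2⟩
          · rintro ⟨h0, h2⟩; exact ⟨⟨h0, le_trans h2.le hb1⟩, h2⟩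
        rw [h1, Real.volume_Ico, max_eq_left hb.le, min_eq_left hb1,
          ENNReal.toReal_ofReal (by linarith)]
        ring
      · have h1 : Icc (0:ℝ) 1 ∩ Iio b = Icc 0 1 :=
          inter_eq_self_of_subset_left fun t ht =>
            mem_Iio.mpr (lt_of_le_of_lt ht.2 hb1)
        rw [h1, Real.volume_Icc, max_eq_left (by linarith), min_eq_right hb1.le]
        norm_num
  · rw [mem_Iio, hb_def]
    exact (lt_div_iff₀ hc).symm
  · have hxc : x / c = t := by
      rw [← ht]
      exact mul_div_cancel_right₀ _ hc.ne'
    rw [hb_def, hxc]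

def phi (v : Fin 3 → ℝ) (p : ℝ × ℝ × ℝ) : ℝ :=
  (min (max (p.1 / v 0) 0) 1 * v 0 - p.1)
    + (min (max (p.2.1 / v 1) 0) 1 * v 1 - p.2.1)
    + (min (max (p.2.2 / v 2) 0) 1 * v 2 - p.2.2)

lemma phi_meas (v : Fin 3 → ℝ) : Measurable (phi v) := by
  unfold phi
  have h1 : Measurable fun p : ℝ × ℝ × ℝ => p.1 := measurable_fst
  have h2 : Measurable fun p : ℝ × ℝ × ℝ => p.2.1 := measurable_fst.comp measurable_snd
  have h3 : Measurable fun p : ℝ × ℝ × ℝ => p.2.2 := measurable_snd.comp measurable_snd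
  exact (((((((h1.div_const _).max measurable_const).min measurable_const).mul_const _).sub
    h1).add (((((h2.div_const _).max measurable_const).min measurable_const).mul_const _).sub
    h2)).add (((((h3.div_const _).max measurable_const).min measurable_const).mul_const _).sub
    h3))

lemma term_eq (c x : ℝ) (hc : 0 < c) (hx : 0 ≤ x) (hxc : x ≤ c) :
    min (max (x / c) 0) 1 * c - x = 0 := by
  rw [max_eq_left (div_nonneg hx hc.le), min_eq_left ((div_le_one hc).mpr hxc),
    div_mul_cancel₀ _ hc.ne']
  ring

lemma term_le (c x : ℝ) (hc : 0 < c) (hx : 0 ≤ x) :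
    min (max (x / c) 0) 1 * c - x ≤ 0 := by
  rcases le_or_gt x c with h | h
  · rw [term_eq c x hc hx h]
  · rw [max_eq_left (div_nonneg hx hc.le),
      min_eq_right (by rw [le_div_iff₀ hc]; linarith)]
    linarith

lemma phi_nonpos (v : Fin 3 → ℝ) (hv0 : 0 < v 0) (hv1 : 0 < v 1) (hv2 : 0 < v 2)
    (p : ℝ × ℝ × ℝ) (h1 : 0 ≤ p.1) (h2 : 0 ≤ p.2.1) (h3 : 0 ≤ p.2.2) :
    phi v p ≤ 0 := by
  have t1 := term_le (v 0) p.1 hv0 h1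
  have t2 := term_le (v 1) p.2.1 hv1 h2
  have t3 := term_le (v 2) p.2.2 hv2 h3
  unfold phi
  linarith

lemma phi_zero (v : Fin 3 → ℝ) (hv0 : 0 < v 0) (hv1 : 0 < v 1) (hv2 : 0 < v 2)
    (p : ℝ × ℝ × ℝ) (h1 : 0 ≤ p.1) (h2 : 0 ≤ p.2.1) (h3 : 0 ≤ p.2.2)
    (h1' : p.1 ≤ v 0) (h2' : p.2.1 ≤ v 1) (h3' : p.2.2 ≤ v 2) :
    phi v p = 0 := by
  unfold phi
  rw [term_eq (v 0) p.1 hv0 h1 h1', term_eq (v 1) p.2.1 hv1 h2 h2',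
    term_eq (v 2) p.2.2 hv2 h3 h3']
  ring

lemma payoff_int (B : Fin 2 → ℝ) (v : Fin 3 → ℝ) (i : Fin 2)
    (hv0 : 0 < v 0) (hv1 : 0 < v 1) (hv2 : 0 < v 2) (p : ℝ × ℝ × ℝ) :
    ∫ t in Icc (0:ℝ) 1, payoff3 B v i p
        ((1 - t) * v 0 + t * 0, (1 - t) * 0 + t * v 1, (1 - t) * 0 + t * v 2)
      = phi v p := by
  haveI := prob_restrict
  have hg1 : Measurable (fun t : ℝ => (1 - t) * v 0) :=
    (measurable_const.sub measurable_id).mul_const _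
  have hg2 : Measurable (fun t : ℝ => t * v 1) := measurable_id.mul_const _
  have hg3 : Measurable (fun t : ℝ => t * v 2) := measurable_id.mul_const _
  have hi1 : IntegrableOn
      (fun t => winProb3 B (v 0) i p.1 ((1 - t) * v 0) * v 0 - p.1) (Icc (0:ℝ) 1) :=
    ((wp_integrable B (v 0) i _ hg1 p.1).mul_const _).sub (integrable_const _)
  have hi2 : IntegrableOn
      (fun t => winProb3 B (v 1) i p.2.1 (t * v 1) * v 1 - p.2.1) (Icc (0:ℝ) 1) :=
    ((wp_integrable B (v 1) i _ hg2 p.2.1).mul_const _).sub (integrable_const _)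
  have hi3 : IntegrableOn
      (fun t => winProb3 B (v 2) i p.2.2 (t * v 2) * v 2 - p.2.2) (Icc (0:ℝ) 1) :=
    ((wp_integrable B (v 2) i _ hg3 p.2.2).mul_const _).sub (integrable_const _)
  have hi12 : IntegrableOn
      (fun t => (winProb3 B (v 0) i p.1 ((1 - t) * v 0) * v 0 - p.1)
        + (winProb3 B (v 1) i p.2.1 (t * v 1) * v 1 - p.2.1)) (Icc (0:ℝ) 1) :=
    hi1.add hi2
  simp only [payoff3, mul_zero, add_zero, zero_add]
  rw [integral_add hi12 hi3, integral_add hi1 hi2,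
    integral_sub ((wp_integrable B (v 0) i _ hg1 p.1).mul_const _) (integrable_const _),
    integral_sub ((wp_integrable B (v 1) i _ hg2 p.2.1).mul_const _) (integrable_const _),
    integral_sub ((wp_integrable B (v 2) i _ hg3 p.2.2).mul_const _) (integrable_const _),
    integral_mul_const, integral_mul_const, integral_mul_const,
    wp_integral_down B (v 0) i (v 0) hv0 p.1,
    wp_integral_up B (v 1) i (v 1) hv1 p.2.1,
    wp_integral_up B (v 2) i (v 2) hv2 p.2.2,
    integral_const]
  unfold phi
  simp [measure_univ]

end NashAux


/-- Three items with common values `v₁ ≥ v₂ ≥ v₃ > 0` and large budgets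
(`Bᵢ ≥ max {(v₁+v₂+v₃)/2, v₁}`), in the case `(v₁+v₂+v₃)/2 ≤ v₁`: both players
playing the uniform distribution on the segment from `A = (v₁, 0, 0)` to
`B = (0, v₂, v₃)` is a Nash equilibrium. -/
theorem nash_three_items_case2 (B : Fin 2 → ℝ) (v : Fin 3 → ℝ)
    (hv3 : 0 < v 2) (hv23 : v 2 ≤ v 1) (hv12 : v 1 ≤ v 0)
    (hB : ∀ i, max ((v 0 + v 1 + v 2) / 2) (v 0) ≤ B i)
    (hz : (v 0 + v 1 + v 2) / 2 ≤ v 0) :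
    IsNash3 B v (fun _ =>
      unifSeg3 (v 0, 0, 0) (0, v 1, v 2)) := by
  have hv2' : 0 < v 2 := hv3
  have hv1' : 0 < v 1 := lt_of_lt_of_le hv3 hv23
  have hv0' : 0 < v 0 := lt_of_lt_of_le hv1' hv12
  haveI := NashAux.prob_restrict
  have hγm : Measurable (fun t : ℝ =>
      ((1 - t) * v 0 + t * 0, (1 - t) * 0 + t * v 1, (1 - t) * 0 + t * v 2)) := by
    refine Measurable.prod ?_ (Measurable.prod ?_ ?_) <;> fun_prop
  have hmap : unifSeg3 (v 0, 0, 0) (0, v 1, v 2)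
      = Measure.map (fun t : ℝ =>
          ((1 - t) * v 0 + t * 0, (1 - t) * 0 + t * v 1, (1 - t) * 0 + t * v 2))
        (volume.restrict (Icc (0:ℝ) 1)) := rfl
  have hFmeas : ∀ c : ℝ, MeasurableSet (Feas3 c) := by
    intro c
    unfold Feas3
    simp only [setOf_and]
    have h1 : Measurable fun p : ℝ × ℝ × ℝ => p.1 := measurable_fst
    have h2 : Measurable fun p : ℝ × ℝ × ℝ => p.2.1 := measurable_fst.comp measurable_snd
    have h3 : Measurable fun p : ℝ × ℝ × ℝ => p.2.2 := measurable_snd.comp measurable_snd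
    exact ((measurableSet_le measurable_const h1).inter
      ((measurableSet_le measurable_const h2).inter
        ((measurableSet_le measurable_const h3).inter
          (measurableSet_le ((h1.add h2).add h3) measurable_const))))
  have hsub : ∀ j : Fin 2, Icc (0:ℝ) 1 ⊆
      (fun t : ℝ => ((1 - t) * v 0 + t * 0, (1 - t) * 0 + t * v 1, (1 - t) * 0 + t * v 2))
        ⁻¹' Feas3 (B j) := by
    intro j t ht
    obtain ⟨ht0, ht1⟩ := ht
    have hBj : v 0 ≤ B j := le_trans (le_max_right _ _) (hB j)
    have hsum : v 1 + v 2 ≤ v 0 := by linarith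
    simp only [mem_preimage, Feas3, mem_setOf_eq, mul_zero, add_zero, zero_add]
    refine ⟨mul_nonneg (by linarith) hv0'.le, mul_nonneg ht0 hv1'.le,
      mul_nonneg ht0 hv2'.le, ?_⟩
    nlinarith [mul_nonneg ht0 (by linarith : (0:ℝ) ≤ v 0 - v 1 - v 2)]
  have hstrat : ∀ j : Fin 2, IsStrategy3 (B j) (unifSeg3 (v 0, 0, 0) (0, v 1, v 2)) := by
    intro j
    constructor
    · rw [hmap]
      exact Measure.isProbabilityMeasure_map hγm.aemeasurable
    · rw [hmap, Measure.map_apply hγm (hFmeas (B j)),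
        Measure.restrict_apply (hγm (hFmeas (B j))),
        inter_eq_self_of_subset_right (hsub j), Real.volume_Icc]
      norm_num
  have hinner : ∀ (i : Fin 2) (p : ℝ × ℝ × ℝ),
      (∫ q, payoff3 B v i p q ∂(unifSeg3 (v 0, 0, 0) (0, v 1, v 2)))
        = NashAux.phi v p := by
    intro i p
    have hpm : Measurable (fun q : ℝ × ℝ × ℝ => payoff3 B v i p q) := by
      unfold payoff3
      have h1 : Measurable fun q : ℝ × ℝ × ℝ => winProb3 B (v 0) i p.1 q.1 * v 0 - p.1 :=
        (((NashAux.wp_meas B (v 0) i p.1).comp measurable_fst).mul_const _).sub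
          measurable_const
      have h2 : Measurable fun q : ℝ × ℝ × ℝ =>
          winProb3 B (v 1) i p.2.1 q.2.1 * v 1 - p.2.1 :=
        (((NashAux.wp_meas B (v 1) i p.2.1).comp
          (measurable_fst.comp measurable_snd)).mul_const _).sub measurable_const
      have h3 : Measurable fun q : ℝ × ℝ × ℝ =>
          winProb3 B (v 2) i p.2.2 q.2.2 * v 2 - p.2.2 :=
        (((NashAux.wp_meas B (v 2) i p.2.2).comp
          (measurable_snd.comp measurable_snd)).mul_const _).sub measurable_const
      exact (h1.add h2).add h3
    rw [hmap, integral_map hγm.aemeasurable (by rw [← hmap]; exact hpm.aestronglyMeasurable)]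
    exact NashAux.payoff_int B v i hv0' hv1' hv2' p
  have hEU : ∀ (i : Fin 2) (σ : Measure (ℝ × ℝ × ℝ)),
      expUtil3 B v i σ (unifSeg3 (v 0, 0, 0) (0, v 1, v 2))
        = ∫ p, NashAux.phi v p ∂σ := by
    intro i σ
    unfold expUtil3
    exact integral_congr_ae (Filter.Eventually.of_forall fun p => hinner i p)
  have hRHS : ∫ p, NashAux.phi v p ∂(unifSeg3 (v 0, 0, 0) (0, v 1, v 2)) = 0 := by
    rw [hmap, integral_map hγm.aemeasurable
      (by rw [← hmap]; exact (NashAux.phi_meas v).aestronglyMeasurable)]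
    have hzero : ∀ t ∈ Icc (0:ℝ) 1,
        NashAux.phi v ((1 - t) * v 0 + t * 0, (1 - t) * 0 + t * v 1, (1 - t) * 0 + t * v 2)
          = 0 := by
      intro t ht
      obtain ⟨ht0, ht1⟩ := ht
      refine NashAux.phi_zero v hv0' hv1' hv2' _ ?_ ?_ ?_ ?_ ?_ ?_ <;>
        simp only [mul_zero, add_zero, zero_add]
      · exact mul_nonneg (by linarith) hv0'.le
      · exact mul_nonneg ht0 hv1'.le
      · exact mul_nonneg ht0 hv2'.le
      · nlinarith [mul_nonneg ht0 hv0'.le]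
      · nlinarith [mul_nonneg (by linarith : (0:ℝ) ≤ 1 - t) hv1'.le]
      · nlinarith [mul_nonneg (by linarith : (0:ℝ) ≤ 1 - t) hv2'.le]
    rw [setIntegral_congr_fun measurableSet_Icc hzero]
    simp
  constructor
  · exact fun j => hstrat j
  · intro i μ hμ
    change expUtil3 B v i μ (unifSeg3 (v 0, 0, 0) (0, v 1, v 2))
      ≤ expUtil3 B v i (unifSeg3 (v 0, 0, 0) (0, v 1, v 2))
          (unifSeg3 (v 0, 0, 0) (0, v 1, v 2))
    rw [hEU i μ, hEU i _, hRHS]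
    haveI := hμ.1
    have hcompl : μ (Feas3 (B i))ᶜ = 0 := by
      rw [measure_compl (hFmeas (B i)) (measure_ne_top μ _), hμ.2, measure_univ]
      simp
    have hae : ∀ᵐ p ∂μ, p ∈ Feas3 (B i) := by
      rw [ae_iff]
      rw [show {p : ℝ × ℝ × ℝ | ¬ p ∈ Feas3 (B i)} = (Feas3 (B i))ᶜ from rfl]
      exact hcompl
    refine integral_nonpos_of_ae ?_
    filter_upwards [hae] with p hp
    obtain ⟨h1, h2, h3, _⟩ := hp
    exact NashAux.phi_nonpos v hv0' hv1' hv2' p h1 h2 h3
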